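/- arXiv:1306.3595 — 3 statements merged into one kernel-verified Lean document; each statement's English description precedes it below -/
import Mathlib

section
/- Let d ∈ (0,1), let F ∈ SR_d^2(0+), let t₀ ∈ ℝ and let s ≤ 0. Then for every ε ∈ (0,d), C_F^{d,s}(t₀) ⊆ C^{d−ε,s}(t₀); that is, every continuous function in the 2-microlocal space with gauge F of parameters (d,s) at t₀ lies in the classical 2-microlocal space C^{d−ε,s}(t₀). -/
open Set Filter MeasureTheory intervalIntegral Polynomial Metric
open scoped Topology

noncomputable section

/-- Mixed partial derivative `F^{(n,m)}`: `n` derivatives in the first (time) variable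
and `m` derivatives in the second variable. -/
noncomputable def pderiv2 (n m : ℕ) (F : ℝ → ℝ → ℝ) : ℝ → ℝ → ℝ :=
  fun s r => iteratedDeriv m (fun r' => iteratedDeriv n (fun s' => F s' r') s) r

/-- The closed half-plane `E = {(s,r) : r ≤ s}`. -/
def Ebar : Set (ℝ × ℝ) := {p | p.2 ≤ p.1}

/-- The open half-plane `Ẽ = {(s,r) : r < s}`. -/
def Etil : Set (ℝ × ℝ) := {p | p.2 < p.1}

/-- Membership in `C₊^{(k)}(E)` : continuous on `E`, `k` times continuously
differentiable on `Ẽ`, and strictly positive on `Ẽ`. -/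
structure CPlus (k : ℕ) (F : ℝ → ℝ → ℝ) : Prop where
  cont : ContinuousOn (fun p : ℝ × ℝ => F p.1 p.2) Ebar
  smooth : ContDiffOn ℝ k (fun p : ℝ × ℝ => F p.1 p.2) Etil
  pos : ∀ p ∈ Etil, 0 < F p.1 p.2

/-- `F` is a function of smooth variation of index `(ρ, k)` at the diagonal,
i.e. `F ∈ SR_ρ^k(0+)`. -/
structure SmoothVariation (ρ : ℝ) (k : ℕ) (F : ℝ → ℝ → ℝ) : Prop where
  mem : CPlus k F
  condA : ∀ K : Set ℝ, IsCompact K → ∀ ε > 0, ∃ h₀ > 0, ∀ h : ℝ, 0 < h → h < h₀ →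
    ∀ t ∈ K, |h * pderiv2 0 1 F t (t - h) / F t (t - h) + ρ| < ε
  condB : ∀ K : Set ℝ, IsCompact K → ∀ ε > 0, ∃ h₀ > 0, ∀ h : ℝ, 0 < h → h < h₀ →
    ∀ t ∈ K, |h * pderiv2 1 0 F (t + h) t / F (t + h) t - ρ| < ε
  condC : ∀ j : ℕ, 2 ≤ j → j ≤ k → ∀ K : Set ℝ, IsCompact K → ∀ ε > 0, ∃ h₀ > 0,
    ∀ h : ℝ, 0 < h → h < h₀ → ∀ t ∈ K,
      |h ^ j * pderiv2 (j - 1) 1 F t (t - h) / F t (t - h)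
        + ∏ i ∈ Finset.range j, (ρ - (i : ℝ))| < ε
  condD : ∀ K : Set ℝ, IsCompact K → ∀ ε > 0, ∃ h₀ > 0, ∀ h : ℝ, 0 < h → h < h₀ →
    ∀ t ∈ K, |h ^ 2 * pderiv2 0 2 F t (t - h) / F t (t - h) - ρ * (ρ - 1)| < ε

/-- The 2-microlocal space with gauge function `F`, `C_F^{d,s'}(t₀)`. -/
def MemCF (F : ℝ → ℝ → ℝ) (d s' t₀ : ℝ) (g : ℝ → ℝ) : Prop :=
  ∃ C > 0, ∃ h > 0, ∃ P : Polynomial ℝ, (P.natDegree : ℤ) ≤ ⌊d - s'⌋ ∧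
    ∀ u v : ℝ, u ∈ Metric.ball t₀ h → v ∈ Metric.ball t₀ h → v ≤ u →
      |(g u - P.eval u) - (g v - P.eval v)| ≤
        C * F u v * (|u - t₀| + |v - t₀|) ^ (-s')

/-- The classical 2-microlocal space `C^{σ,s'}(t₀)`. -/
def MemC2ML (σ s' t₀ : ℝ) (g : ℝ → ℝ) : Prop :=
  ∃ C > 0, ∃ h > 0, ∃ P : Polynomial ℝ, (P.natDegree : ℤ) ≤ ⌊σ - s'⌋ ∧
    ∀ u v : ℝ, u ∈ Metric.ball t₀ h → v ∈ Metric.ball t₀ h →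
      |(g u - P.eval u) - (g v - P.eval v)| ≤
        C * |u - v| ^ σ * (|u - t₀| + |v - t₀|) ^ (-s')

/-- The pointwise Hölder space `C^l(t₀)`. -/
def PtwHolder (l t₀ : ℝ) (g : ℝ → ℝ) : Prop :=
  ∃ C > 0, ∃ h > 0, ∃ P : Polynomial ℝ, (P.natDegree : ℤ) ≤ ⌊l⌋ ∧
    ∀ t ∈ Metric.ball t₀ h, |g t - P.eval t| ≤ C * |t - t₀| ^ l

/-- The pointwise Hölder exponent `h_g(t₀) = sup{l : g ∈ C^l(t₀)}`. -/
def holderExp (g : ℝ → ℝ) (t₀ : ℝ) : ℝ := sSup {l | PtwHolder l t₀ g}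

/-- The Hölder exponent with gauge function `F`,
`h̄^d_g(t₀) = d − inf{s' ≤ 0 : g ∈ C_F^{d,s'}(t₀)}`. -/
def holderGaugeExp (F : ℝ → ℝ → ℝ) (d : ℝ) (g : ℝ → ℝ) (t₀ : ℝ) : ℝ :=
  d - sInf {s' | s' ≤ 0 ∧ MemCF F d s' t₀ g}

/-- The 2-microlocal frontier `σ_{g,t₀}(s') = sup{σ ∈ [0,1) : g ∈ C^{σ,s'}(t₀)}`. -/
def frontier2ML (g : ℝ → ℝ) (t₀ s' : ℝ) : ℝ :=
  sSup {σ | σ ∈ Set.Ico (0:ℝ) 1 ∧ MemC2ML σ s' t₀ g}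

/-- `g` is càdlàg on `[0,∞)`: right-continuous with left limits. -/
def CadlagOn (g : ℝ → ℝ) : Prop :=
  (∀ t : ℝ, 0 ≤ t → Tendsto g (𝓝[Set.Ici t] t) (𝓝 (g t))) ∧
  (∀ t : ℝ, 0 < t → ∃ L : ℝ, Tendsto g (𝓝[Set.Iio t] t) (𝓝 L))


lemma Etil_open : IsOpen Etil := isOpen_lt continuous_snd continuous_fst

lemma abs_pow_sub_pow_le' (a b R : ℝ) (m : ℕ) (ha : |a| ≤ R) (hb : |b| ≤ R) :
    |a ^ m - b ^ m| ≤ m * |a - b| * R ^ (m - 1) := by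
  have hR : 0 ≤ R := le_trans (abs_nonneg a) ha
  rw [← geom_sum₂_mul a b m, abs_mul]
  have hsum : |∑ i ∈ Finset.range m, a ^ i * b ^ (m - 1 - i)| ≤ m * R ^ (m - 1) := by
    calc |∑ i ∈ Finset.range m, a ^ i * b ^ (m - 1 - i)|
        ≤ ∑ i ∈ Finset.range m, |a ^ i * b ^ (m - 1 - i)| := Finset.abs_sum_le_sum_abs _ _
      _ ≤ ∑ i ∈ Finset.range m, R ^ (m - 1) := by
          apply Finset.sum_le_sum
          intro i hi
          rw [abs_mul, abs_pow, abs_pow]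
          calc |a| ^ i * |b| ^ (m - 1 - i) ≤ R ^ i * R ^ (m - 1 - i) := by
                apply mul_le_mul (pow_le_pow_left₀ (abs_nonneg a) ha i)
                  (pow_le_pow_left₀ (abs_nonneg b) hb _) (by positivity) (by positivity)
            _ = R ^ (m - 1) := by
                rw [← pow_add]
                congr 1
                have := Finset.mem_range.mp hi
                omega
      _ = m * R ^ (m - 1) := by rw [Finset.sum_const, Finset.card_range, nsmul_eq_mul]
  calc |∑ i ∈ Finset.range m, a ^ i * b ^ (m - 1 - i)| * |a - b|
      ≤ (m * R ^ (m - 1)) * |a - b| := mul_le_mul_of_nonneg_right hsum (abs_nonneg _)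
    _ = m * |a - b| * R ^ (m - 1) := by ring

lemma hasDerivAt_diag (F : ℝ → ℝ → ℝ)
    (hF : ContDiffOn ℝ 2 (fun p : ℝ × ℝ => F p.1 p.2) Etil)
    (t h : ℝ) (hh : 0 < h) :
    HasDerivAt (fun h' => F t (t - h')) (-(pderiv2 0 1 F t (t - h))) h := by
  have hmem : ((t, t - h) : ℝ × ℝ) ∈ Etil := by simp only [Etil, Set.mem_setOf_eq]; linarith
  have hdF : DifferentiableAt ℝ (fun p : ℝ × ℝ => F p.1 p.2) (t, t - h) :=
    (hF.contDiffAt (Etil_open.mem_nhds hmem)).differentiableAt (by norm_num)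
  have hpart : DifferentiableAt ℝ (fun r => F t r) (t - h) := by
    have heq : (fun r : ℝ => F t r) = (fun p : ℝ × ℝ => F p.1 p.2) ∘ (fun r => (t, r)) := rfl
    rw [heq]
    exact hdF.comp _ (DifferentiableAt.prodMk (differentiableAt_const t) differentiableAt_id)
  have hD : HasDerivAt (fun r => F t r) (pderiv2 0 1 F t (t - h)) (t - h) := by
    have := hpart.hasDerivAt
    simpa [pderiv2, iteratedDeriv_one, iteratedDeriv_zero] using this
  have hin : HasDerivAt (fun h' : ℝ => t - h') (-1) h := (hasDerivAt_id h).const_sub t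
  have := hD.comp h hin
  rw [mul_neg, mul_one] at this
  exact this

lemma gauge_bound (d : ℝ) (F : ℝ → ℝ → ℝ) (hF : SmoothVariation d 2 F)
    (t₀ ε : ℝ) (hε0 : 0 < ε) (hεd : ε < d) :
    ∃ h₁ > 0, ∃ M : ℝ, 0 ≤ M ∧ ∀ t ∈ Metric.closedBall t₀ 1, ∀ h : ℝ, 0 < h → h ≤ h₁ →
      F t (t - h) ≤ M * h ^ (d - ε) := by
  obtain ⟨h₀, hh₀, hA⟩ := hF.condA (Metric.closedBall t₀ 1) (isCompact_closedBall _ _) ε hε0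
  set h₁ := h₀ / 2 with hh₁def
  have hh₁ : 0 < h₁ := by positivity
  have hh₁lt : h₁ < h₀ := by linarith
  have φpos : ∀ t : ℝ, ∀ h : ℝ, 0 < h → 0 < F t (t - h) := by
    intro t h hh
    exact hF.mem.pos (t, t - h) (by simp only [Etil, Set.mem_setOf_eq]; linarith)
  have main : ∀ t ∈ Metric.closedBall t₀ 1, ∀ h : ℝ, 0 < h → h ≤ h₁ →
      F t (t - h) ≤ (F t (t - h₁) / h₁ ^ (d - ε)) * h ^ (d - ε) := by
    intro t ht h hh hhle
    set ψ : ℝ → ℝ := fun x => Real.log (F t (t - x)) - (d - ε) * Real.log x with hψdef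
    have hψd : ∀ x ∈ Set.Ioo (0:ℝ) h₀, HasDerivAt ψ
        (-(pderiv2 0 1 F t (t - x)) / F t (t - x) - (d - ε) * x⁻¹) x := by
      intro x hx
      exact ((hasDerivAt_diag F hF.mem.smooth t x hx.1).log (φpos t x hx.1).ne').sub
        ((Real.hasDerivAt_log hx.1.ne').const_mul (d - ε))
    have hmono : StrictMonoOn ψ (Set.Ioo 0 h₀) := by
      apply strictMonoOn_of_deriv_pos (convex_Ioo 0 h₀)
      · intro x hx
        exact (hψd x hx).continuousAt.continuousWithinAt
      · intro x hx
        rw [interior_Ioo] at hx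
        rw [(hψd x hx).deriv]
        have hAx := hA x hx.1 hx.2 t ht
        have hφ := φpos t x hx.1
        rw [abs_lt] at hAx
        have h1 : x * pderiv2 0 1 F t (t - x) / F t (t - x) < ε - d := by linarith
        rw [div_lt_iff₀ hφ] at h1
        have h2 : (d - ε) / x < -(pderiv2 0 1 F t (t - x)) / F t (t - x) := by
          rw [div_lt_div_iff₀ hx.1 hφ]
          nlinarith [h1]
        have h3 : (d - ε) * x⁻¹ = (d - ε) / x := (div_eq_mul_inv _ _).symm
        rw [h3]
        linarith
    have hψle : ψ h ≤ ψ h₁ := by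
      rcases eq_or_lt_of_le hhle with rfl | hlt
      · exact le_rfl
      · exact le_of_lt (hmono ⟨hh, lt_of_le_of_lt hhle hh₁lt⟩ ⟨hh₁, hh₁lt⟩ hlt)
    have hlog : Real.log (F t (t - h)) ≤
        Real.log ((F t (t - h₁) / h₁ ^ (d - ε)) * h ^ (d - ε)) := by
      rw [Real.log_mul (div_pos (φpos t h₁ hh₁) (by positivity)).ne'
          (by positivity : (0:ℝ) < h ^ (d-ε)).ne',
        Real.log_div (φpos t h₁ hh₁).ne' (by positivity : (0:ℝ) < h₁ ^ (d-ε)).ne',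
        Real.log_rpow hh, Real.log_rpow hh₁]
      simp only [hψdef] at hψle
      linarith
    calc F t (t - h) = Real.exp (Real.log (F t (t - h))) :=
          (Real.exp_log (φpos t h hh)).symm
      _ ≤ Real.exp (Real.log ((F t (t - h₁) / h₁ ^ (d - ε)) * h ^ (d - ε))) :=
          Real.exp_le_exp.mpr hlog
      _ = (F t (t - h₁) / h₁ ^ (d - ε)) * h ^ (d - ε) :=
          Real.exp_log (mul_pos (div_pos (φpos t h₁ hh₁) (by positivity))
            (Real.rpow_pos_of_pos hh _))
  have hcont : ContinuousOn (fun t => F t (t - h₁)) (Metric.closedBall t₀ 1) := by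
    apply hF.mem.smooth.continuousOn.comp
      (Continuous.continuousOn (by continuity : Continuous (fun t : ℝ => ((t, t - h₁) : ℝ × ℝ))))
    intro t _
    simp only [Etil, Set.mem_setOf_eq]
    linarith
  obtain ⟨x, hx, hmax⟩ := (isCompact_closedBall t₀ 1).exists_isMaxOn
    ⟨t₀, Metric.mem_closedBall_self zero_le_one⟩ hcont
  refine ⟨h₁, hh₁, F x (x - h₁) / h₁ ^ (d - ε),
    le_of_lt (div_pos (φpos x h₁ hh₁) (by positivity)), ?_⟩
  intro t ht h hh hhle
  calc F t (t - h) ≤ (F t (t - h₁) / h₁ ^ (d - ε)) * h ^ (d - ε) := main t ht h hh hhle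
    _ ≤ (F x (x - h₁) / h₁ ^ (d - ε)) * h ^ (d - ε) := by
        apply mul_le_mul_of_nonneg_right _ (by positivity)
        exact div_le_div_of_nonneg_right (hmax ht) (by positivity)

/-- Theorem 2.1(b): `C_F^{d,s}(t₀) ⊆ C^{d−ε,s}(t₀)` for every `ε ∈ (0,d)`. -/
theorem microlocal_gauge_subset_classical
    (d : ℝ) (hd : d ∈ Set.Ioo (0:ℝ) 1) (F : ℝ → ℝ → ℝ)
    (hF : SmoothVariation d 2 F) (t₀ : ℝ) (s : ℝ) (hs : s ≤ 0)
    (ε : ℝ) (hε : ε ∈ Set.Ioo (0:ℝ) d)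
    (g : ℝ → ℝ) (hg : Continuous g) (hmem : MemCF F d s t₀ g) :
    MemC2ML (d - ε) s t₀ g := by
  obtain ⟨hd0, hd1⟩ := hd
  obtain ⟨hε0, hεd⟩ := hε
  obtain ⟨C, hC, h, hh, P, hPdeg, hP⟩ := hmem
  obtain ⟨h₁, hh₁, M, hM, hFbd⟩ := gauge_bound d F hF t₀ ε hε0 hεd
  -- integer bookkeeping
  set n : ℕ := (⌊d - ε - s⌋).toNat with hn
  have hds : 0 < d - ε - s := by linarith
  have hfl0 : (0:ℤ) ≤ ⌊d - ε - s⌋ := Int.floor_nonneg.mpr (le_of_lt hds)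
  have hnz : (n : ℤ) = ⌊d - ε - s⌋ := Int.toNat_of_nonneg hfl0
  set m : ℕ := n + 1 with hm
  have hnR : (n : ℝ) ≤ d - ε - s := by
    have h1 : ((⌊d - ε - s⌋ : ℤ) : ℝ) ≤ d - ε - s := Int.floor_le _
    have h2 : ((n : ℤ) : ℝ) = ((⌊d - ε - s⌋ : ℤ) : ℝ) := by exact_mod_cast hnz
    rw [← h2] at h1
    exact_mod_cast h1
  have hmR : d - ε - s < (m : ℝ) := by
    have h1 : d - ε - s < ((⌊d - ε - s⌋ : ℤ) : ℝ) + 1 := Int.lt_floor_add_one _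
    have h2 : ((n : ℤ) : ℝ) = ((⌊d - ε - s⌋ : ℤ) : ℝ) := by exact_mod_cast hnz
    have h3 : (m : ℝ) = (n : ℝ) + 1 := by push_cast [hm]; ring
    rw [h3]
    rw [← h2] at h1
    push_cast at h1 ⊢
    linarith
  have hPm : P.natDegree ≤ m := by
    have h1 : ⌊d - s⌋ ≤ ⌊d - ε - s⌋ + 1 := by
      have hle : d - s ≤ (d - ε - s) + 1 := by linarith
      calc ⌊d - s⌋ ≤ ⌊(d - ε - s) + 1⌋ := Int.floor_mono hle
        _ = ⌊d - ε - s⌋ + 1 := Int.floor_add_one _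
    have h2 : (P.natDegree : ℤ) ≤ (n : ℤ) + 1 := le_trans hPdeg (by rw [hnz]; exact h1)
    have h3 : ((m : ℕ) : ℤ) = (n : ℤ) + 1 := by push_cast [hm]; ring
    rw [← h3] at h2
    exact_mod_cast h2
  -- polynomial surgery
  set P' : Polynomial ℝ := P.comp (Polynomial.X + Polynomial.C t₀) with hP'
  have hP'deg : P'.natDegree ≤ m := by
    rw [hP', Polynomial.natDegree_comp, Polynomial.natDegree_X_add_C, mul_one]
    exact hPm
  set c : ℝ := P'.coeff m with hc
  set Q' : Polynomial ℝ := P' - Polynomial.C c * Polynomial.X ^ m with hQ'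
  have hQ'deg : Q'.natDegree ≤ n := by
    rw [Polynomial.natDegree_le_iff_coeff_eq_zero]
    intro k hk
    rw [hQ', Polynomial.coeff_sub, Polynomial.coeff_C_mul, Polynomial.coeff_X_pow]
    rcases eq_or_ne k m with rfl | hkm
    · simp [hc]
    · rw [if_neg hkm, mul_zero, sub_zero]
      exact Polynomial.coeff_eq_zero_of_natDegree_lt (lt_of_le_of_lt hP'deg (by omega))
  set Q : Polynomial ℝ := Q'.comp (Polynomial.X - Polynomial.C t₀) with hQ
  have hQdeg : Q.natDegree ≤ n := by
    rw [hQ, Polynomial.natDegree_comp, Polynomial.natDegree_X_sub_C, mul_one]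
    exact hQ'deg
  have hQeval : ∀ u : ℝ, Q.eval u = P.eval u - c * (u - t₀) ^ m := by
    intro u
    simp only [hQ, hQ', hP', Polynomial.eval_comp, Polynomial.eval_sub, Polynomial.eval_add,
      Polynomial.eval_mul, Polynomial.eval_pow, Polynomial.eval_X, Polynomial.eval_C,
      sub_add_cancel]
  -- radius and constant
  set δ : ℝ := min (min h h₁) 1 / 2 with hδdef
  have hδ : 0 < δ := by
    have := lt_min (lt_min hh hh₁) one_pos
    positivity
  have hδh : δ ≤ h / 2 := by
    have h1 := min_le_left (min h h₁) 1
    have h2 := min_le_left h h₁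
    rw [hδdef]; linarith
  have hδh₁ : 2 * δ ≤ h₁ := by
    have h1 := min_le_left (min h h₁) 1
    have h2 := min_le_right h h₁
    rw [hδdef]; linarith
  have hδ1 : 2 * δ ≤ 1 := by
    have h1 := min_le_right (min h h₁) 1
    rw [hδdef]; linarith
  set C₂ : ℝ := C * M + |c| * m + 1 with hC₂
  have hC₂pos : 0 < C₂ := by positivity
  refine ⟨C₂, hC₂pos, δ, hδ, Q, ?_, ?_⟩
  · refine le_trans ?_ (le_of_eq hnz)
    exact_mod_cast hQdeg
  -- the increment bound
  have key : ∀ u v : ℝ, u ∈ Metric.ball t₀ δ → v ∈ Metric.ball t₀ δ → v ≤ u →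
      |(g u - Q.eval u) - (g v - Q.eval v)| ≤
        C₂ * |u - v| ^ (d - ε) * (|u - t₀| + |v - t₀|) ^ (-s) := by
    intro u v hu hv hvu
    rcases eq_or_lt_of_le hvu with rfl | hlt
    · have hne : d - ε ≠ 0 := ne_of_gt (by linarith)
      simp [sub_self, Real.zero_rpow hne]
    · -- v < u
      rw [Metric.mem_ball, Real.dist_eq] at hu hv
      have huv0 : 0 < u - v := sub_pos.mpr hlt
      have habs : |u - v| = u - v := abs_of_pos huv0
      have hu1 : u ∈ Metric.closedBall t₀ 1 := by
        rw [Metric.mem_closedBall, Real.dist_eq]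
        have := abs_nonneg (v - t₀)
        linarith [hu, hδ1, abs_nonneg (u - t₀)]
      have huvh₁ : u - v ≤ h₁ := by
        have h1 : u - v ≤ |u - t₀| + |v - t₀| := by
          have h2 : u - v = (u - t₀) - (v - t₀) := by ring
          calc u - v ≤ |u - v| := le_abs_self _
            _ = |(u - t₀) - (v - t₀)| := by rw [h2]
            _ ≤ |u - t₀| + |v - t₀| := abs_sub _ _
        linarith
      have hFuv : F u v ≤ M * |u - v| ^ (d - ε) := by
        have := hFbd u hu1 (u - v) huv0 huvh₁
        rw [habs]
        simpa [sub_sub_cancel] using this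
      set R : ℝ := |u - t₀| + |v - t₀| with hR
      have hUVR : |u - v| ≤ R := by
        have h2 : u - v = (u - t₀) - (v - t₀) := by ring
        calc |u - v| = |(u - t₀) - (v - t₀)| := by rw [h2]
          _ ≤ |u - t₀| + |v - t₀| := abs_sub _ _
      have habspos : 0 < |u - v| := abs_pos.mpr (sub_ne_zero.mpr (ne_of_gt hlt))
      have hRpos : 0 < R := lt_of_lt_of_le habspos hUVR
      have hRle1 : R ≤ 1 := by rw [hR]; linarith [hu, hv]
      -- first term
      have hu' : u ∈ Metric.ball t₀ h := by
        rw [Metric.mem_ball, Real.dist_eq]; linarith [hu]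
      have hv' : v ∈ Metric.ball t₀ h := by
        rw [Metric.mem_ball, Real.dist_eq]; linarith [hv]
      have hA2 : |(g u - P.eval u) - (g v - P.eval v)| ≤
          C * M * |u - v| ^ (d - ε) * R ^ (-s) := by
        calc |(g u - P.eval u) - (g v - P.eval v)| ≤ C * F u v * R ^ (-s) :=
              hP u v hu' hv' hvu
          _ ≤ C * (M * |u - v| ^ (d - ε)) * R ^ (-s) := by
              apply mul_le_mul_of_nonneg_right _ (Real.rpow_nonneg (le_of_lt hRpos) _)
              exact mul_le_mul_of_nonneg_left hFuv (le_of_lt hC)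
          _ = C * M * |u - v| ^ (d - ε) * R ^ (-s) := by ring
      -- second term : monomial increment
      have haR : |u - t₀| ≤ R := by rw [hR]; linarith [abs_nonneg (v - t₀)]
      have hbR : |v - t₀| ≤ R := by rw [hR]; linarith [abs_nonneg (u - t₀)]
      have hmon : |(u - t₀) ^ m - (v - t₀) ^ m| ≤ m * |u - v| * R ^ (m - 1) := by
        have := abs_pow_sub_pow_le' (u - t₀) (v - t₀) R m haR hbR
        have h2 : (u - t₀) - (v - t₀) = u - v := by ring
        rwa [h2] at this
      -- converting the monomial bound to rpow form
      have hexp : -s ≤ (1 - (d - ε)) + ((m - 1 : ℕ) : ℝ) := by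
        have h2 : ((m - 1 : ℕ) : ℝ) = (n : ℝ) := by
          rw [hm]; push_cast [Nat.add_sub_cancel]; ring
        rw [h2]
        have h3 : (m : ℝ) = (n : ℝ) + 1 := by push_cast [hm]; ring
        rw [h3] at hmR
        linarith
      have hstep : |u - v| * R ^ (m - 1) ≤ |u - v| ^ (d - ε) * R ^ (-s) := by
        have h1 : |u - v| = |u - v| ^ (d - ε) * |u - v| ^ (1 - (d - ε)) := by
          rw [← Real.rpow_add habspos]
          norm_num
        calc |u - v| * R ^ (m - 1)
            = |u - v| ^ (d - ε) * (|u - v| ^ (1 - (d - ε)) * R ^ ((m - 1 : ℕ) : ℝ)) := by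
              rw [Real.rpow_natCast]
              nth_rewrite 1 [h1]
              ring
          _ ≤ |u - v| ^ (d - ε) * (R ^ (1 - (d - ε)) * R ^ ((m - 1 : ℕ) : ℝ)) := by
              apply mul_le_mul_of_nonneg_left _ (Real.rpow_nonneg (abs_nonneg _) _)
              apply mul_le_mul_of_nonneg_right _ (Real.rpow_nonneg (le_of_lt hRpos) _)
              exact Real.rpow_le_rpow (abs_nonneg _) hUVR (by linarith)
          _ = |u - v| ^ (d - ε) * R ^ ((1 - (d - ε)) + ((m - 1 : ℕ) : ℝ)) := by
              rw [Real.rpow_add hRpos]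
          _ ≤ |u - v| ^ (d - ε) * R ^ (-s) := by
              apply mul_le_mul_of_nonneg_left _ (Real.rpow_nonneg (abs_nonneg _) _)
              exact Real.rpow_le_rpow_of_exponent_ge hRpos hRle1 hexp
      -- assemble
      calc |(g u - Q.eval u) - (g v - Q.eval v)|
          = |((g u - P.eval u) - (g v - P.eval v)) +
              c * ((u - t₀) ^ m - (v - t₀) ^ m)| := by
            rw [hQeval u, hQeval v]
            congr 1
            ring
        _ ≤ |(g u - P.eval u) - (g v - P.eval v)| +
              |c * ((u - t₀) ^ m - (v - t₀) ^ m)| := abs_add_le _ _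
        _ ≤ C * M * |u - v| ^ (d - ε) * R ^ (-s) +
              |c| * (m * |u - v| * R ^ (m - 1)) := by
            apply add_le_add hA2
            rw [abs_mul]
            exact mul_le_mul_of_nonneg_left hmon (abs_nonneg c)
        _ ≤ C * M * |u - v| ^ (d - ε) * R ^ (-s) +
              |c| * m * (|u - v| ^ (d - ε) * R ^ (-s)) := by
            apply add_le_add_right
            calc |c| * (m * |u - v| * R ^ (m - 1))
                = |c| * m * (|u - v| * R ^ (m - 1)) := by ring
              _ ≤ |c| * m * (|u - v| ^ (d - ε) * R ^ (-s)) :=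
                  mul_le_mul_of_nonneg_left hstep (by positivity)
        _ ≤ C₂ * |u - v| ^ (d - ε) * R ^ (-s) := by
            rw [hC₂]
            have h1 : 0 ≤ |u - v| ^ (d - ε) * R ^ (-s) := by positivity
            nlinarith [h1]
  intro u v hu hv
  rcases le_total v u with hle | hle
  · exact key u v hu hv hle
  · have := key v u hv hu hle
    rw [abs_sub_comm] at this
    rw [abs_sub_comm u v, add_comm (|u - t₀|) (|v - t₀|)]
    exact this
end
end

section
/- Let d ∈ (0,1), l ≥ 0, set K = ⌊l+d⌋ + 2, and let F ∈ SR_d^K(0+). Then for every ε > 0 and every −∞ < a < b < ∞, one has lim_{h↓0} sup_{a < v < u < b, u−v ≤ h} (u−v)^{d+ε}/F(u,v) = 0. -/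
open Set Filter MeasureTheory intervalIntegral Polynomial Metric
open scoped Topology

noncomputable section

private lemma pderiv01 (F : ℝ → ℝ → ℝ) (t r : ℝ) :
    pderiv2 0 1 F t r = deriv (fun r' => F t r') r := by
  simp [pderiv2, iteratedDeriv_zero, iteratedDeriv_one]

private lemma hasDerivAt_partial {F : ℝ → ℝ → ℝ} {K : ℕ} (hK : 1 ≤ K)
    (hs : ContDiffOn ℝ K (fun p : ℝ × ℝ => F p.1 p.2) Etil)
    {t r : ℝ} (hr : r < t) :
    HasDerivAt (fun r' => F t r') (pderiv2 0 1 F t r) r := by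
  have hopen : IsOpen Etil := isOpen_lt continuous_snd continuous_fst
  have hmem : ((t, r) : ℝ × ℝ) ∈ Etil := hr
  have hdiff : DifferentiableAt ℝ (fun p : ℝ × ℝ => F p.1 p.2) (t, r) := by
    have h1 := (hs.differentiableOn (by exact_mod_cast Nat.one_le_iff_ne_zero.mp hK)) (t, r) hmem
    exact h1.differentiableAt (hopen.mem_nhds hmem)
  have hL := hdiff.hasFDerivAt
  have hline : HasDerivAt (fun r' : ℝ => ((t, r') : ℝ × ℝ)) (0, 1) r :=
    (hasDerivAt_const r t).prodMk (hasDerivAt_id r)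
  have hcomp := hL.comp_hasDerivAt r hline
  have hcomp' : HasDerivAt (fun r' => F t r')
      ((fderiv ℝ (fun p : ℝ × ℝ => F p.1 p.2) (t, r)) (0, 1)) r := hcomp
  have hd : pderiv2 0 1 F t r
      = (fderiv ℝ (fun p : ℝ × ℝ => F p.1 p.2) (t, r)) (0, 1) := by
    rw [pderiv01, hcomp'.deriv]
  rw [hd]; exact hcomp'

/-- Lemma 2.2(b): for `F ∈ SR_d^{⌊l+d⌋+2}(0+)`, every `ε > 0` and `a < b`,
`lim_{h↓0} sup_{a<v<u<b, u−v≤h} (u−v)^{d+ε}/F(u,v) = 0`. -/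
theorem smoothVariation_reciprocal_vanish
    (d l : ℝ) (hd : d ∈ Set.Ioo (0:ℝ) 1) (hl : 0 ≤ l)
    (K : ℕ) (hK : K = (⌊l + d⌋).toNat + 2)
    (F : ℝ → ℝ → ℝ) (hF : SmoothVariation d K F)
    (ε : ℝ) (hε : 0 < ε) (a b : ℝ) (hab : a < b) :
    ∀ η > 0, ∃ h₀ > 0, ∀ u v : ℝ, a < v → v < u → u < b → u - v ≤ h₀ →
      |(u - v) ^ (d + ε) / F u v| < η := by
  intro η hη
  obtain ⟨hd0, hd1⟩ := hd
  have hK1 : 1 ≤ K := by omega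
  set c : ℝ := d + ε/2 with hc
  have hc0 : 0 < c := by positivity
  obtain ⟨h₀', hh₀', hA⟩ := hF.condA (Set.Icc a b) isCompact_Icc (ε/2) (by positivity)
  set h₁ := h₀'/2 with hh₁def
  have hh₁ : 0 < h₁ := by positivity
  have hh₁lt : h₁ < h₀' := by linarith
  -- minimum of F t (t - h₁) over [a,b]
  have hcont : ContinuousOn (fun t => F t (t - h₁)) (Set.Icc a b) := by
    have hmap : Set.MapsTo (fun t : ℝ => ((t, t - h₁) : ℝ × ℝ)) (Set.Icc a b) Ebar := by
      intro t _; show t - h₁ ≤ t; linarith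
    exact hF.mem.cont.comp (Continuous.continuousOn (by continuity)) hmap
  obtain ⟨t₀, ht₀mem, ht₀min'⟩ :=
    isCompact_Icc.exists_isMinOn (Set.nonempty_Icc.mpr hab.le) hcont
  have ht₀min : ∀ t ∈ Set.Icc a b, F t₀ (t₀ - h₁) ≤ F t (t - h₁) := fun t ht => ht₀min' ht
  set m := F t₀ (t₀ - h₁) with hm
  have hm0 : 0 < m := hF.mem.pos (t₀, t₀ - h₁) (show t₀ - h₁ < t₀ by linarith)
  set B := m * h₁ ^ (-c) with hB
  have hB0 : 0 < B := mul_pos hm0 (Real.rpow_pos_of_pos hh₁ _)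
  refine ⟨min h₁ ((η * B / 2) ^ (2/ε)),
    lt_min hh₁ (Real.rpow_pos_of_pos (by positivity) _), ?_⟩
  intro u v hav hvu hub huv
  set h := u - v with hhdef
  have hh0 : 0 < h := by simp only [hhdef]; linarith
  have hhh₁ : h ≤ h₁ := le_trans huv (min_le_left _ _)
  have hu : u ∈ Set.Icc a b := ⟨by linarith, by linarith⟩
  set g : ℝ → ℝ := fun x => F u (u - x) with hg
  set G : ℝ → ℝ := fun x => g x * x ^ (-c) with hGdef
  have hgpos : ∀ x : ℝ, 0 < x → 0 < g x := fun x hx =>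
    hF.mem.pos (u, u - x) (show u - x < u by linarith)
  have hgderiv : ∀ x ∈ Set.Ioo (0:ℝ) h₀',
      HasDerivAt g (-(pderiv2 0 1 F u (u - x))) x := by
    intro x hx
    have h1 := hasDerivAt_partial hK1 hF.mem.smooth (show u - x < u by linarith [hx.1])
    have h2 : HasDerivAt (fun x : ℝ => u - x) (-1) x := (hasDerivAt_id x).const_sub u
    have h3 := h1.comp x h2
    rw [show -(pderiv2 0 1 F u (u - x)) = pderiv2 0 1 F u (u - x) * (-1) by ring]; exact h3
  have hGderiv : ∀ x ∈ Set.Ioo (0:ℝ) h₀',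
      HasDerivAt G (-(pderiv2 0 1 F u (u - x)) * x ^ (-c)
        + g x * (-c * x ^ (-c - 1))) x := by
    intro x hx
    exact (hgderiv x hx).mul (Real.hasDerivAt_rpow_const (Or.inl (ne_of_gt hx.1)))
  have hGneg : ∀ x ∈ Set.Ioo (0:ℝ) h₀', deriv G x < 0 := by
    intro x hx
    rw [(hGderiv x hx).deriv]
    set D := pderiv2 0 1 F u (u - x) with hD
    have hgx := hgpos x hx.1
    have habs := hA x hx.1 hx.2 u hu
    have hgx' : F u (u - x) = g x := rfl
    rw [hgx'] at habs
    have hlow : -c < x * D / g x := by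
      have := (abs_lt.mp habs).1
      rw [hc]; linarith
    have hxd : -c * g x < x * D := (lt_div_iff₀ hgx).mp hlow
    have hxc : x ^ (-c) = x ^ (-c - 1) * x := by
      have h5 := Real.rpow_add hx.1 (-c - 1) 1
      rw [Real.rpow_one, show -c - 1 + 1 = -c by ring] at h5
      exact h5
    have hpow : (0:ℝ) < x ^ (-c - 1) := Real.rpow_pos_of_pos hx.1 _
    have heq : -D * x ^ (-c) + g x * (-c * x ^ (-c - 1))
        = x ^ (-c - 1) * (-(x * D) - (-(-c * g x))) := by
      rw [hxc]; ring
    rw [heq]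
    have : -(x * D) - (-(-c * g x)) < 0 := by linarith
    exact mul_neg_of_pos_of_neg hpow this
  -- G h₁ ≤ G h
  have hGle : G h₁ ≤ G h := by
    rcases eq_or_lt_of_le hhh₁ with heq | hlt
    · rw [heq]
    · have hanti : StrictAntiOn G (Set.Icc h h₁) := by
        apply strictAntiOn_of_deriv_neg (convex_Icc _ _)
        · intro x hx
          have hx' : x ∈ Set.Ioo (0:ℝ) h₀' :=
            ⟨lt_of_lt_of_le hh0 hx.1, lt_of_le_of_lt hx.2 hh₁lt⟩
          exact ((hGderiv x hx').differentiableAt.continuousAt).continuousWithinAt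
        · intro x hx
          rw [interior_Icc] at hx
          exact hGneg x ⟨lt_trans hh0 hx.1, lt_trans hx.2 hh₁lt⟩
      exact le_of_lt (hanti ⟨le_refl h, hhh₁⟩ ⟨hhh₁, le_refl h₁⟩ hlt)
  have hgh₁ : m ≤ g h₁ := ht₀min u hu
  have hBle : B ≤ F u v * h ^ (-c) := by
    have h1 : B ≤ G h₁ := by
      rw [hGdef, hB]
      exact mul_le_mul_of_nonneg_right hgh₁ (Real.rpow_pos_of_pos hh₁ _).le
    have hFuv : F u v = g h := by rw [hg]; congr 1; rw [hhdef]; ring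
    rw [hFuv]
    exact le_trans h1 hGle
  have hFlow : B * h ^ c ≤ F u v := by
    have hhc := Real.rpow_pos_of_pos hh0 c
    calc B * h ^ c ≤ F u v * h ^ (-c) * h ^ c :=
          mul_le_mul_of_nonneg_right hBle hhc.le
      _ = F u v := by
          rw [mul_assoc, ← Real.rpow_add hh0, neg_add_cancel, Real.rpow_zero, mul_one]
  have hFpos : 0 < F u v := hF.mem.pos (u, v) hvu
  have hBh : 0 < B * h ^ c := mul_pos hB0 (Real.rpow_pos_of_pos hh0 c)
  have hratio : h ^ (d + ε) / F u v ≤ h ^ (ε/2) / B := by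
    have h1 : h ^ (d + ε) / F u v ≤ h ^ (d + ε) / (B * h ^ c) :=
      div_le_div_of_nonneg_left (Real.rpow_pos_of_pos hh0 _).le hBh hFlow
    have h2 : h ^ (d + ε) / (B * h ^ c) = h ^ (ε/2) / B := by
      have hne : h ^ c ≠ 0 := ne_of_gt (Real.rpow_pos_of_pos hh0 c)
      have hBne : B ≠ 0 := ne_of_gt hB0
      rw [show d + ε = c + ε/2 by rw [hc]; ring, Real.rpow_add hh0]
      field_simp
    rwa [h2] at h1
  have hfin : h ^ (ε/2) / B ≤ η / 2 := by
    have h1 : h ^ (ε/2) ≤ ((η * B / 2) ^ (2/ε)) ^ (ε/2) :=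
      Real.rpow_le_rpow hh0.le (le_trans huv (min_le_right _ _)) (by positivity)
    have h2 : ((η * B / 2) ^ (2/ε)) ^ (ε/2) = η * B / 2 := by
      rw [← Real.rpow_mul (by positivity), div_mul_div_comm,
        show (2:ℝ) * ε / (ε * 2) = 1 by field_simp, Real.rpow_one]
    rw [h2] at h1
    rw [div_le_div_iff₀ hB0 (by norm_num : (0:ℝ) < 2)]
    calc h ^ (ε/2) * 2 ≤ (η * B / 2) * 2 := by linarith
      _ = η * B := by ring
  have hpos : 0 < h ^ (d + ε) / F u v := div_pos (Real.rpow_pos_of_pos hh0 _) hFpos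
  rw [abs_of_pos hpos]
  calc h ^ (d + ε) / F u v ≤ η / 2 := le_trans hratio hfin
    _ < η := by linarith
end
end

section
/- Let d ∈ (0,1), l > 0, let F ∈ SR_d^{⌊l+d⌋+2}(0+), set f = F^{(0,1)}, let g : [0,∞) → ℝ be càdlàg, let t ∈ (0,1), let ε ∈ (0,l), and let P be a polynomial of degree at most ⌊l⌋ such that |g(r) − P(r)| ≤ C₀|r−t|^{l−ε} for all r ∈ [0,1] and some C₀ > 0. Then there exist a constant C > 0 and a radius h > 0 such that |I₁,₁(v,δ)| ≤ C·F(u,v)·(|u−t|^{l−ε} + |v−t|^{l−ε}) for all u,v ∈ B(t,h) with 0 < v < u and δ = u − v. -/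
open Set Filter MeasureTheory intervalIntegral Polynomial Metric
open scoped Topology

noncomputable section

set_option maxHeartbeats 2000000 in
/-- Lemma 3.6: bound on `I₁,₁`. -/
theorem bound_I11
    (d l : ℝ) (hd : d ∈ Set.Ioo (0:ℝ) 1) (hl : 0 < l)
    (F : ℝ → ℝ → ℝ) (hF : SmoothVariation d ((⌊l + d⌋).toNat + 2) F)
    (f : ℝ → ℝ → ℝ) (hf : f = pderiv2 0 1 F)
    (g : ℝ → ℝ) (hg : CadlagOn g)
    (t : ℝ) (ht : t ∈ Set.Ioo (0:ℝ) 1) (ε : ℝ) (hε : ε ∈ Set.Ioo (0:ℝ) l)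
    (P : Polynomial ℝ) (hP : (P.natDegree : ℤ) ≤ ⌊l⌋)
    (C₀ : ℝ) (hC₀ : 0 < C₀)
    (hgP : ∀ r ∈ Set.Icc (0:ℝ) 1, |g r - P.eval r| ≤ C₀ * |r - t| ^ (l - ε)) :
    ∃ C > 0, ∃ h > 0, ∀ u v : ℝ, u ∈ Metric.ball t h → v ∈ Metric.ball t h →
      0 < v → v < u →
      |(u - v) * ∫ z in (0:ℝ)..1, f (v + (u - v)) (v + (u - v) * (1 - z)) *
          (g (v + (u - v) * (1 - z)) - P.eval (v + (u - v) * (1 - z)))| ≤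
        C * F u v * (|u - t| ^ (l - ε) + |v - t| ^ (l - ε)) := by
  obtain ⟨hd0, hd1⟩ := hd
  obtain ⟨ht0, ht1⟩ := ht
  obtain ⟨hε0, hεl⟩ := hε
  subst hf
  have hEtil_open : IsOpen Etil := isOpen_lt continuous_snd continuous_fst
  -- negativity of f near the diagonal, from condition (a)
  obtain ⟨h₀, hh₀pos, hneg⟩ := hF.condA (Set.Icc (t - 1) (t + 1)) isCompact_Icc (d / 2)
    (by linarith)
  set h : ℝ := min (min t (1 - t)) (min h₀ 1) / 2 with hh
  have hmin_pos : 0 < min (min t (1 - t)) (min h₀ 1) := by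
    simp only [lt_min_iff]
    exact ⟨⟨ht0, by linarith⟩, hh₀pos, one_pos⟩
  have hhpos : 0 < h := by positivity
  have hht : h ≤ t / 2 := by
    have : min (min t (1 - t)) (min h₀ 1) ≤ t := (min_le_left _ _).trans (min_le_left _ _)
    simp only [hh]; linarith
  have hht1 : h ≤ (1 - t) / 2 := by
    have : min (min t (1 - t)) (min h₀ 1) ≤ 1 - t := (min_le_left _ _).trans (min_le_right _ _)
    simp only [hh]; linarith
  have hhh₀ : 2 * h ≤ h₀ := by
    have : min (min t (1 - t)) (min h₀ 1) ≤ h₀ := (min_le_right _ _).trans (min_le_left _ _)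
    simp only [hh]; linarith
  have hh1 : 2 * h ≤ 1 := by
    have : min (min t (1 - t)) (min h₀ 1) ≤ 1 := (min_le_right _ _).trans (min_le_right _ _)
    simp only [hh]; linarith
  refine ⟨C₀, hC₀, h, hhpos, ?_⟩
  intro u v hu hv hv0 hvu
  have hut : |u - t| < h := by rw [Metric.mem_ball, Real.dist_eq] at hu; exact hu
  have hvt : |v - t| < h := by rw [Metric.mem_ball, Real.dist_eq] at hv; exact hv
  obtain ⟨hut1, hut2⟩ := abs_lt.mp hut
  obtain ⟨hvt1, hvt2⟩ := abs_lt.mp hvt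
  have hu1 : u < 1 := by linarith
  have huK : u ∈ Set.Icc (t - 1) (t + 1) := ⟨by linarith, by linarith⟩
  have huv : v + (u - v) = u := by ring
  rw [huv]
  set δ := u - v with hδ
  have hδ0 : 0 < δ := by simp only [hδ]; linarith
  have hδh₀ : δ < h₀ := by simp only [hδ]; linarith
  -- abbreviations
  set rr : ℝ → ℝ := fun z => v + δ * (1 - z) with hrr
  have hrge : ∀ z : ℝ, z ≤ 1 → v ≤ rr z := by
    intro z hz; simp only [hrr]; nlinarith
  have hrlt : ∀ z : ℝ, 0 < z → rr z < u := by
    intro z hz; simp only [hrr, hδ]; nlinarith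
  have hrle : ∀ z : ℝ, 0 ≤ z → rr z ≤ u := by
    intro z hz; simp only [hrr, hδ]; nlinarith
  -- f is negative at (u, r) for v ≤ r < u
  have hfneg : ∀ r : ℝ, v ≤ r → r < u → pderiv2 0 1 F u r < 0 := by
    intro r h1 h2
    have hur : 0 < u - r := by linarith
    have hur2 : u - r < h₀ := by linarith
    have hFpos := hF.mem.pos (u, r) (show r < u from h2)
    have hx := hneg (u - r) hur hur2 u huK
    rw [show u - (u - r) = r by ring] at hx
    obtain ⟨_, hx2⟩ := abs_lt.mp hx
    by_contra hge
    push_neg at hge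
    have hnn : 0 ≤ (u - r) * pderiv2 0 1 F u r / F u r :=
      div_nonneg (mul_nonneg hur.le hge) hFpos.le
    linarith
  -- derivative of the section r' ↦ F u r'
  have hder : ∀ r : ℝ, r < u → HasDerivAt (fun r' => F u r') (pderiv2 0 1 F u r) r := by
    intro r hrU
    have hmem : ((u, r) : ℝ × ℝ) ∈ Etil := hrU
    have hCD : ContDiffAt ℝ (((⌊l + d⌋).toNat + 2 : ℕ) : ℕ∞) (fun p : ℝ × ℝ => F p.1 p.2)
        (u, r) := hF.mem.smooth.contDiffAt (hEtil_open.mem_nhds hmem)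
    have hdp : DifferentiableAt ℝ (fun p : ℝ × ℝ => F p.1 p.2) (u, r) :=
      hCD.differentiableAt (by simp)
    have hpair : DifferentiableAt ℝ (fun r' : ℝ => ((u, r') : ℝ × ℝ)) r :=
      DifferentiableAt.prodMk (differentiableAt_const u) differentiableAt_id
    have hcomp : DifferentiableAt ℝ (fun r' => F u r') r := by
      simpa [Function.comp_def] using hdp.comp r hpair
    have heq : pderiv2 0 1 F u r = deriv (fun r' => F u r') r := by
      simp [pderiv2, iteratedDeriv_one, iteratedDeriv_zero]
    rw [heq]
    exact hcomp.hasDerivAt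
  -- the function H and its derivative
  set H : ℝ → ℝ := fun z => F u (rr z) with hH
  set ψ : ℝ → ℝ := fun z => -pderiv2 0 1 F u (rr z) with hψ
  have hrr_deriv : ∀ z : ℝ, HasDerivAt rr (-δ) z := by
    intro z
    have h1 : HasDerivAt (fun z : ℝ => v + δ * (1 - z)) (δ * -1) z :=
      ((((hasDerivAt_id z).const_sub 1).const_mul δ).const_add v)
    simpa [hrr, mul_neg_one] using h1
  have hHderiv : ∀ z ∈ Set.Ioo (0:ℝ) 1, HasDerivAt H (δ * ψ z) z := by
    intro z hz
    have h1 : rr z < u := hrlt z hz.1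
    have h2 := (hder (rr z) h1).comp z (hrr_deriv z)
    have h3 : pderiv2 0 1 F u (rr z) * (-δ) = δ * ψ z := by simp only [hψ]; ring
    rw [h3] at h2
    simpa [Function.comp_def, hH] using h2
  have hψ_nonneg : ∀ z ∈ Set.Ioo (0:ℝ) 1, 0 ≤ δ * ψ z := by
    intro z hz
    have := hfneg (rr z) (hrge z hz.2.le) (hrlt z hz.1)
    have : 0 ≤ ψ z := by simp only [hψ]; linarith
    positivity
  -- continuity of H on [0,1]
  have hHcont : ContinuousOn H (Set.Icc 0 1) := by
    have hmap : Set.MapsTo (fun z : ℝ => ((u, rr z) : ℝ × ℝ)) (Set.Icc 0 1) Ebar := by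
      intro z hz
      exact hrle z hz.1
    have hcin : ContinuousOn (fun z : ℝ => ((u, rr z) : ℝ × ℝ)) (Set.Icc 0 1) := by
      apply Continuous.continuousOn; fun_prop
    simpa [Function.comp_def, hH] using hF.mem.cont.comp hcin hmap
  -- integrability of δψ and FTC-type bound
  have hint : IntegrableOn (fun z => δ * ψ z) (Set.Ioc 0 1) :=
    intervalIntegral.integrableOn_deriv_of_nonneg hHcont hHderiv hψ_nonneg
  have hintIcc : IntegrableOn (fun z => δ * ψ z) (Set.Icc 0 1) := by
    rwa [integrableOn_Icc_iff_integrableOn_Ioc]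
  have hII : IntervalIntegrable (fun z => δ * ψ z) volume 0 1 :=
    (intervalIntegrable_iff_integrableOn_Ioc_of_le zero_le_one).mpr hint
  have hbound : (∫ z in (0:ℝ)..1, δ * ψ z) ≤ H 1 - H 0 :=
    intervalIntegral.integral_le_sub_of_hasDeriv_right_of_le zero_le_one hHcont
      (fun z hz => (hHderiv z hz).hasDerivWithinAt) hintIcc (fun z _ => le_rfl)
  have hH1 : H 1 = F u v := by simp [hH, hrr]
  have hH0 : H 0 = F u u := by
    have : rr 0 = u := by simp only [hrr, hδ]; ring
    simp [hH, this]
  have hFuu : 0 ≤ F u u := by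
    have hcw : ContinuousWithinAt H (Set.Icc 0 1) 0 := hHcont 0 (by norm_num)
    have h2 : Tendsto H (𝓝[Set.Ioc (0:ℝ) 1] 0) (𝓝 (H 0)) :=
      (hcw.mono_left (nhdsWithin_mono _ Set.Ioc_subset_Icc_self))
    haveI : (𝓝[Set.Ioc (0:ℝ) 1] (0:ℝ)).NeBot := by
      rw [nhdsWithin_Ioc_eq_nhdsGT zero_lt_one]; infer_instance
    have h3 : 0 ≤ H 0 := by
      refine ge_of_tendsto h2 ?_
      filter_upwards [self_mem_nhdsWithin] with z hz
      exact (hF.mem.pos (u, rr z) (show rr z < u from hrlt z hz.1)).le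
    rwa [hH0] at h3
  have hbound' : (∫ z in (0:ℝ)..1, δ * ψ z) ≤ F u v := by
    rw [hH1, hH0] at hbound; linarith
  -- the bound M on |g - P| over [v,u]
  set M : ℝ := C₀ * (|u - t| ^ (l - ε) + |v - t| ^ (l - ε)) with hM
  have hsum_nonneg : 0 ≤ |u - t| ^ (l - ε) + |v - t| ^ (l - ε) :=
    add_nonneg (Real.rpow_nonneg (abs_nonneg _) _) (Real.rpow_nonneg (abs_nonneg _) _)
  have hM0 : 0 ≤ M := mul_nonneg hC₀.le hsum_nonneg
  have hq : ∀ z : ℝ, z ∈ Set.Ioc (0:ℝ) 1 → |g (rr z) - P.eval (rr z)| ≤ M := by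
    intro z hz
    have h1 : v ≤ rr z := hrge z hz.2
    have h2 : rr z < u := hrlt z hz.1
    have hr01 : rr z ∈ Set.Icc (0:ℝ) 1 := ⟨by linarith, by linarith⟩
    have hb := hgP (rr z) hr01
    have habs : |rr z - t| ≤ max |u - t| |v - t| := by
      rcases le_total t (rr z) with hc | hc
      · have e1 : |rr z - t| = rr z - t := abs_of_nonneg (by linarith)
        have e2 : u - t ≤ |u - t| := le_abs_self _
        refine le_max_of_le_left ?_
        rw [e1]; linarith
      · have e1 : |rr z - t| = t - rr z := by rw [abs_sub_comm]; exact abs_of_nonneg (by linarith)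
        have e2 : t - v ≤ |v - t| := by rw [abs_sub_comm]; exact le_abs_self _
        refine le_max_of_le_right ?_
        rw [e1]; linarith
    have hpow : |rr z - t| ^ (l - ε) ≤ |u - t| ^ (l - ε) + |v - t| ^ (l - ε) := by
      have h3 : |rr z - t| ^ (l - ε) ≤ (max |u - t| |v - t|) ^ (l - ε) :=
        Real.rpow_le_rpow (abs_nonneg _) habs (by linarith)
      rcases max_cases |u - t| |v - t| with ⟨he, _⟩ | ⟨he, _⟩ <;> rw [he] at h3
      · linarith [Real.rpow_nonneg (abs_nonneg (v - t)) (l - ε)]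
      · linarith [Real.rpow_nonneg (abs_nonneg (u - t)) (l - ε)]
    calc |g (rr z) - P.eval (rr z)| ≤ C₀ * |rr z - t| ^ (l - ε) := hb
      _ ≤ M := by rw [hM]; exact mul_le_mul_of_nonneg_left hpow hC₀.le
  -- the integrand
  set φ : ℝ → ℝ := fun z => pderiv2 0 1 F u (v + δ * (1 - z)) *
    (g (v + δ * (1 - z)) - P.eval (v + δ * (1 - z))) with hφ
  have hre : (∫ z in (0:ℝ)..1, pderiv2 0 1 F u (v + δ * (1 - z)) *
      (g (v + δ * (1 - z)) - P.eval (v + δ * (1 - z)))) = ∫ z in (0:ℝ)..1, φ z := rfl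
  rw [hre]
  have hRHS_nonneg : 0 ≤ C₀ * F u v * (|u - t| ^ (l - ε) + |v - t| ^ (l - ε)) :=
    mul_nonneg (mul_nonneg hC₀.le (hF.mem.pos (u, v) (show v < u from hvu)).le) hsum_nonneg
  by_cases hφint : IntervalIntegrable φ volume 0 1
  · -- pointwise a.e. bound |φ| ≤ M ψ on [0,1]
    have hae : (fun z => |φ z|) ≤ᵐ[volume.restrict (Set.Icc (0:ℝ) 1)] fun z => M * ψ z := by
      have hne0 : ∀ᵐ z : ℝ, z ≠ (0:ℝ) := by
        rw [ae_iff]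
        have : {z : ℝ | ¬z ≠ 0} = {(0:ℝ)} := by ext z; simp
        rw [this]; exact measure_singleton 0
      filter_upwards [ae_restrict_mem measurableSet_Icc, ae_restrict_of_ae hne0] with z hz hz0
      have hzIoc : z ∈ Set.Ioc (0:ℝ) 1 := ⟨lt_of_le_of_ne hz.1 (Ne.symm hz0), hz.2⟩
      have hp : pderiv2 0 1 F u (rr z) < 0 := hfneg (rr z) (hrge z hzIoc.2) (hrlt z hzIoc.1)
      have hφz : φ z = pderiv2 0 1 F u (rr z) * (g (rr z) - P.eval (rr z)) := rfl
      rw [hφz, abs_mul, abs_of_neg hp]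
      have : -pderiv2 0 1 F u (rr z) = ψ z := rfl
      rw [this]
      have hψz : 0 ≤ ψ z := by simp only [hψ]; linarith
      calc ψ z * |g (rr z) - P.eval (rr z)| ≤ ψ z * M :=
            mul_le_mul_of_nonneg_left (hq z hzIoc) hψz
        _ = M * ψ z := by ring
    have hMψ_II : IntervalIntegrable (fun z => M * ψ z) volume 0 1 := by
      have h1 := hII.const_mul (M / δ)
      have h2 : (fun z => M / δ * (δ * ψ z)) = fun z => M * ψ z := by
        funext z; rw [← mul_assoc, div_mul_cancel₀ M hδ0.ne']
      rwa [h2] at h1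
    have habs_II : IntervalIntegrable (fun z => |φ z|) volume 0 1 := hφint.abs
    have hstep1 : |∫ z in (0:ℝ)..1, φ z| ≤ ∫ z in (0:ℝ)..1, |φ z| := by
      have := intervalIntegral.norm_integral_le_integral_norm (f := φ) (μ := volume)
        (a := 0) (b := 1) zero_le_one
      simpa [Real.norm_eq_abs] using this
    have hstep2 : (∫ z in (0:ℝ)..1, |φ z|) ≤ ∫ z in (0:ℝ)..1, M * ψ z :=
      intervalIntegral.integral_mono_ae_restrict zero_le_one habs_II hMψ_II hae
    have hstep3 : (∫ z in (0:ℝ)..1, M * ψ z) = M * ∫ z in (0:ℝ)..1, ψ z :=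
      intervalIntegral.integral_const_mul _ _
    have hstep4 : (∫ z in (0:ℝ)..1, δ * ψ z) = δ * ∫ z in (0:ℝ)..1, ψ z :=
      intervalIntegral.integral_const_mul _ _
    have hψint : δ * (∫ z in (0:ℝ)..1, ψ z) ≤ F u v := by rw [← hstep4]; exact hbound'
    calc |δ * ∫ z in (0:ℝ)..1, φ z| = δ * |∫ z in (0:ℝ)..1, φ z| := by
          rw [abs_mul, abs_of_pos hδ0]
      _ ≤ δ * (M * ∫ z in (0:ℝ)..1, ψ z) := by
          refine mul_le_mul_of_nonneg_left ?_ hδ0.le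
          exact hstep1.trans (hstep2.trans_eq hstep3)
      _ = M * (δ * ∫ z in (0:ℝ)..1, ψ z) := by ring
      _ ≤ M * F u v := mul_le_mul_of_nonneg_left hψint hM0
      _ = C₀ * F u v * (|u - t| ^ (l - ε) + |v - t| ^ (l - ε)) := by rw [hM]; ring
  · rw [intervalIntegral.integral_undef hφint]
    simpa using hRHS_nonneg
end
end
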